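/- Let X be a Banach space for which the duality map is uniformly quasicontinuous: for every ε > 0 there exists δ > 0 such that for any f ∈ S(X*) there exists x ∈ S(X) with D(S(X) ∩ B(x, δ)) ⊆ B(f, ε). Then for every ε > 0 there exists δ > 0 such that for every f ∈ S(X*) there exists x ∈ S(X) with d₁(x, δ) < ε (i.e., x ∈ M_{ε,δ}(X)) and D(x) ⊆ B(f, ε). -/

import Mathlib

open NormedSpace

/-- Normalizing a nonzero vector near a unit vector stays close. -/
lemma near_normalize {X : Type*} [NormedAddCommGroup X] [NormedSpace ℝ X]
    (x w : X) (hx : ‖x‖ = 1) (hw : w ≠ 0) :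
    ‖(‖w‖⁻¹ • w) - x‖ ≤ 2 * ‖w - x‖ := by
  have hwn : ‖w‖ ≠ 0 := norm_ne_zero_iff.mpr hw
  have h1 : (‖w‖⁻¹ • w) - w = (‖w‖⁻¹ - 1) • w := by
    rw [sub_smul, one_smul]
  have h2 : ‖(‖w‖⁻¹ • w) - w‖ = |1 - ‖w‖| := by
    calc ‖(‖w‖⁻¹ • w) - w‖ = |‖w‖⁻¹ - 1| * ‖w‖ := by
          rw [h1, norm_smul, Real.norm_eq_abs]
      _ = |(‖w‖⁻¹ - 1) * ‖w‖| := by rw [abs_mul, abs_of_nonneg (norm_nonneg w)]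
      _ = |1 - ‖w‖| := by rw [show (‖w‖⁻¹ - 1) * ‖w‖ = 1 - ‖w‖ from by field_simp]
  have h3 : |1 - ‖w‖| ≤ ‖w - x‖ := by
    have := abs_norm_sub_norm_le x w
    rw [hx] at this
    calc |1 - ‖w‖| = |‖x‖ - ‖w‖| := by rw [hx]
      _ ≤ ‖x - w‖ := abs_norm_sub_norm_le x w
      _ = ‖w - x‖ := norm_sub_rev x w
  calc ‖(‖w‖⁻¹ • w) - x‖ ≤ ‖(‖w‖⁻¹ • w) - w‖ + ‖w - x‖ := by
        simpa using norm_add_le ((‖w‖⁻¹ • w) - w) (w - x)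
    _ ≤ ‖w - x‖ + ‖w - x‖ := by rw [h2]; linarith
    _ = 2 * ‖w - x‖ := by ring

/-- Uniform quasicontinuity of the duality map implies condition (e):
one can find `x ∈ M_{ε,δ}(X)` (i.e. `d₁(x, δ) < ε`) with `D(x) ⊆ B(f, ε)`. -/
theorem stmt_12 {X : Type*} [NormedAddCommGroup X] [NormedSpace ℝ X] [CompleteSpace X]
    (h : ∀ ε : ℝ, 0 < ε → ∃ δ : ℝ, 0 < δ ∧
      ∀ f : StrongDual ℝ X, ‖f‖ = 1 → ∃ x : X, ‖x‖ = 1 ∧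
        {g : StrongDual ℝ X | ‖g‖ = 1 ∧ ∃ z : X, ‖z‖ = 1 ∧ ‖z - x‖ < δ ∧ g z = 1} ⊆
          Metric.ball f ε) :
    ∀ ε : ℝ, 0 < ε → ∃ δ : ℝ, 0 < δ ∧
      ∀ f : StrongDual ℝ X, ‖f‖ = 1 → ∃ x : X, ‖x‖ = 1 ∧
        sSup {r : ℝ | ∃ lam : ℝ, ∃ y : X, 0 < lam ∧ lam < δ ∧ ‖y‖ ≤ 1 ∧
          r = (‖x + lam • y‖ + ‖x - lam • y‖ - 2) / lam} < ε ∧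
        {g : StrongDual ℝ X | ‖g‖ = 1 ∧ g x = 1} ⊆ Metric.ball f ε := by
  intro ε hε
  obtain ⟨δ₀, hδ₀, H⟩ := h (ε / 3) (by linarith)
  refine ⟨min (δ₀ / 2) (1 / 2), by positivity, ?_⟩
  intro f hf
  obtain ⟨x, hx, hDx⟩ := H f hf
  have key : ∀ (l : ℝ) (y : X), 0 < l → l < min (δ₀ / 2) (1 / 2) → ‖y‖ ≤ 1 →
      (‖x + l • y‖ + ‖x - l • y‖ - 2) / l ≤ 2 * ε / 3 := by
    intro l y hl0 hlδ hy
    have hl1 : l < δ₀ / 2 := lt_of_lt_of_le hlδ (min_le_left _ _)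
    have hl2 : l < 1 / 2 := lt_of_lt_of_le hlδ (min_le_right _ _)
    have hny : ‖l • y‖ ≤ l := by
      rw [norm_smul, Real.norm_eq_abs, abs_of_pos hl0]
      nlinarith [norm_nonneg y]
    -- the two perturbed vectors are nonzero
    have hb : ∀ w : X, ‖w - x‖ ≤ l → w ≠ 0 := by
      intro w hwx h0
      rw [h0] at hwx
      rw [show (0 : X) - x = -x by simp, norm_neg, hx] at hwx
      linarith
    have hw₁x : ‖(x + l • y) - x‖ ≤ l := by simpa using hny
    have hw₂x : ‖(x - l • y) - x‖ ≤ l := by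
      rw [show (x - l • y) - x = -(l • y) by abel, norm_neg]; exact hny
    have hw₁ : (x + l • y) ≠ 0 := hb _ hw₁x
    have hw₂ : (x - l • y) ≠ 0 := hb _ hw₂x
    obtain ⟨g₁, hg₁n, hg₁⟩ := exists_dual_vector ℝ (x + l • y) (norm_ne_zero_iff.mpr hw₁)
    obtain ⟨g₂, hg₂n, hg₂⟩ := exists_dual_vector ℝ (x - l • y) (norm_ne_zero_iff.mpr hw₂)
    -- norms of the perturbed vectors
    have hmem : ∀ (g : StrongDual ℝ X) (w : X), ‖g‖ = 1 → w ≠ 0 → g w = ‖w‖ → ‖w - x‖ ≤ l →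
        g ∈ Metric.ball f (ε / 3) := by
      intro g w hgn hw0 hgw hwx
      apply hDx
      refine ⟨hgn, ‖w‖⁻¹ • w, ?_, ?_, ?_⟩
      · rw [norm_smul, Real.norm_eq_abs, abs_of_nonneg (by positivity),
          inv_mul_cancel₀ (norm_ne_zero_iff.mpr hw0)]
      · calc ‖(‖w‖⁻¹ • w) - x‖ ≤ 2 * ‖w - x‖ := near_normalize x w hx hw0
          _ ≤ 2 * l := by linarith
          _ < δ₀ := by linarith
      · rw [map_smul, smul_eq_mul, hgw, inv_mul_cancel₀ (norm_ne_zero_iff.mpr hw0)]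
    have hg₁b : g₁ ∈ Metric.ball f (ε / 3) := hmem g₁ _ hg₁n hw₁ hg₁ hw₁x
    have hg₂b : g₂ ∈ Metric.ball f (ε / 3) := hmem g₂ _ hg₂n hw₂ hg₂ hw₂x
    have hdist : ‖g₁ - g₂‖ < 2 * ε / 3 := by
      rw [Metric.mem_ball] at hg₁b hg₂b
      calc ‖g₁ - g₂‖ = dist g₁ g₂ := (dist_eq_norm g₁ g₂).symm
        _ ≤ dist g₁ f + dist f g₂ := dist_triangle g₁ f g₂
        _ = dist g₁ f + dist g₂ f := by rw [dist_comm f g₂]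
        _ < 2 * ε / 3 := by linarith
    -- the main estimate
    have b1 : g₁ x ≤ 1 := by
      have h1 := g₁.le_opNorm x
      rw [hg₁n, hx, one_mul, Real.norm_eq_abs] at h1
      linarith [le_abs_self (g₁ x)]
    have b2 : g₂ x ≤ 1 := by
      have h1 := g₂.le_opNorm x
      rw [hg₂n, hx, one_mul, Real.norm_eq_abs] at h1
      linarith [le_abs_self (g₂ x)]
    have b3 : g₁ y - g₂ y ≤ ‖g₁ - g₂‖ := by
      have h1 := (g₁ - g₂).le_opNorm y
      rw [Real.norm_eq_abs] at h1
      have h2 : (g₁ - g₂) y = g₁ y - g₂ y := rfl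
      rw [h2] at h1
      have h3 : ‖g₁ - g₂‖ * ‖y‖ ≤ ‖g₁ - g₂‖ := by
        nlinarith [norm_nonneg (g₁ - g₂)]
      linarith [le_abs_self (g₁ y - g₂ y)]
    have e1 : (g₁ (x + l • y) : ℝ) = g₁ x + l * g₁ y := by
      rw [map_add, map_smul, smul_eq_mul]
    have e2 : (g₂ (x - l • y) : ℝ) = g₂ x - l * g₂ y := by
      rw [map_sub, map_smul, smul_eq_mul]
    have hg₁' : g₁ (x + l • y) = ‖x + l • y‖ := by exact_mod_cast hg₁
    have hg₂' : g₂ (x - l • y) = ‖x - l • y‖ := by exact_mod_cast hg₂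
    have hsum : ‖x + l • y‖ + ‖x - l • y‖ ≤ 2 + l * ‖g₁ - g₂‖ := by
      rw [← hg₁', ← hg₂', e1, e2]
      nlinarith
    rw [div_le_iff₀ hl0]
    nlinarith
  refine ⟨x, hx, ?_, ?_⟩
  · have hb : sSup {r : ℝ | ∃ lam : ℝ, ∃ y : X, 0 < lam ∧ lam < min (δ₀ / 2) (1 / 2) ∧ ‖y‖ ≤ 1 ∧
        r = (‖x + lam • y‖ + ‖x - lam • y‖ - 2) / lam} ≤ 2 * ε / 3 := by
      apply Real.sSup_le
      · rintro r ⟨l, y, hl0, hlδ, hy, rfl⟩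
        exact key l y hl0 hlδ hy
      · linarith
    linarith
  · intro g hg
    apply Metric.ball_subset_ball (by linarith : ε / 3 ≤ ε)
    apply hDx
    exact ⟨hg.1, x, hx, by simpa using hδ₀, hg.2⟩
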